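/- For n > k ≥ 0, the number of lattice paths from (0,0) to (n,k) with steps (1,0), (0,1), and (1,1) that stay strictly below the diagonal y = x except at the starting point, equals Σ_{a_1+⋯+a_{n-k} = k} S_{a_1}⋯S_{a_{n-k}}, i.e., the coefficient of x^k in S(x)^{n-k}. -/

import Mathlib

open Finset PowerSeries

/-- Large Schröder numbers. -/
def schroeder : ℕ → ℕ
  | 0 => 1
  | n + 1 => schroeder n + ∑ i : Fin (n + 1), schroeder i * schroeder (n - i)

/-- The points visited by a path (a list of steps) starting at (0,0). -/
def pts (l : List (ℤ × ℤ)) : List (ℤ × ℤ) :=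
  l.scanl (fun p s => (p.1 + s.1, p.2 + s.2)) (0, 0)

/-- The endpoint of a path starting at (0,0). -/
def endPt (l : List (ℤ × ℤ)) : ℤ × ℤ :=
  ((l.map Prod.fst).sum, (l.map Prod.snd).sum)

/-- All steps are unit steps (1,0) or (0,1). -/
def unitSteps (l : List (ℤ × ℤ)) : Prop := ∀ s ∈ l, s = (1, 0) ∨ s = (0, 1)

/-- All steps are (1,0), (0,1) or (1,1). -/
def schSteps (l : List (ℤ × ℤ)) : Prop := ∀ s ∈ l, s = (1, 0) ∨ s = (0, 1) ∨ s = (1, 1)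

/-- The path stays weakly below the diagonal y = x. -/
def weaklyBelow (l : List (ℤ × ℤ)) : Prop := ∀ p ∈ pts l, p.2 ≤ p.1

/-- The path stays strictly below the diagonal except at its start (0,0). -/
def strictBelowAfterStart (l : List (ℤ × ℤ)) : Prop :=
  ∀ p ∈ pts l, p ≠ (0, 0) → p.2 < p.1

/-- Validity of a path starting at point `p` in a lattice where steps (1,0) and (0,1)
are allowed everywhere and the diagonal step (1,1) is allowed exactly from points
satisfying `D`. -/
def okFrom (D : ℤ × ℤ → Prop) : ℤ × ℤ → List (ℤ × ℤ) → Prop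
  | _, [] => True
  | p, s :: l => (s = (1, 0) ∨ s = (0, 1) ∨ (s = (1, 1) ∧ D p)) ∧
      okFrom D (p.1 + s.1, p.2 + s.2) l

/-- Paths from (0,0) to (n,k) in the Catalan–Schröder lattice L_CS:
diagonal steps allowed from points (a,b) with b ≥ a. -/
def LCS (n k : ℕ) : Set (List (ℤ × ℤ)) :=
  {l | okFrom (fun p => p.1 ≤ p.2) (0, 0) l ∧ endPt l = ((n : ℤ), (k : ℤ))}

/-- Paths from (0,0) to (n,k) in the lattice L*_CS:
diagonal steps allowed only from points (a,b) with b > a. -/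
def LCSstar (n k : ℕ) : Set (List (ℤ × ℤ)) :=
  {l | okFrom (fun p => p.1 < p.2) (0, 0) l ∧ endPt l = ((n : ℤ), (k : ℤ))}

/-- Weakly subdiagonal unit-step paths from (0,0) to (n,k). -/
def CPath (n k : ℕ) : Set (List (ℤ × ℤ)) :=
  {l | unitSteps l ∧ endPt l = ((n : ℤ), (k : ℤ)) ∧ weaklyBelow l}

/-- Weakly subdiagonal paths from (0,0) to (n,k) with steps (1,0),(0,1),(1,1). -/
def SPath (n k : ℕ) : Set (List (ℤ × ℤ)) :=
  {l | schSteps l ∧ endPt l = ((n : ℤ), (k : ℤ)) ∧ weaklyBelow l}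

/-- Number of paths from (0,0) to (n,n) in L_CS. -/
noncomputable def fCS (n : ℕ) : ℕ := Nat.card ↥(LCS n n)

/-- Number of paths from (0,0) to (n,n) in L*_CS. -/
noncomputable def fCSstar (n : ℕ) : ℕ := Nat.card ↥(LCSstar n n)

/-- Generating function of the Catalan numbers. -/
noncomputable def catalanGF : PowerSeries ℤ := PowerSeries.mk fun n => (catalan n : ℤ)

/-- Generating function of the large Schröder numbers. -/
noncomputable def schroederGF : PowerSeries ℤ := PowerSeries.mk fun n => (schroeder n : ℤ)

/-- Generating function F(x) of diagonal path counts in L_CS. -/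
noncomputable def FGF : PowerSeries ℤ := PowerSeries.mk fun n => (fCS n : ℤ)

/-- Generating function F*(x) of diagonal path counts in L*_CS. -/
noncomputable def FstarGF : PowerSeries ℤ := PowerSeries.mk fun n => (fCSstar n : ℤ)

/-- Substitution x ↦ x² in a formal power series: g(x²). -/
noncomputable def subSq (g : PowerSeries ℤ) : PowerSeries ℤ :=
  PowerSeries.mk fun n => if 2 ∣ n then PowerSeries.coeff (n / 2) g else 0

/-- Substitution x ↦ x³ in a formal power series: g(x³). -/
noncomputable def subCube (g : PowerSeries ℤ) : PowerSeries ℤ :=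
  PowerSeries.mk fun n => if 3 ∣ n then PowerSeries.coeff (n / 3) g else 0

-- general scanl lemmas
lemma scanl_append_singleton {α β : Type*} (f : α → β → α) (l : List β) (a : α) (s : β) :
    List.scanl f a (l ++ [s]) = List.scanl f a l ++ [f (List.foldl f a l) s] := by
  induction l generalizing a with
  | nil => simp [List.scanl]
  | cons x xs ih => simp [List.scanl_cons, ih]

lemma foldl_mem_scanl {α β : Type*} (f : α → β → α) (l : List β) (a : α) :
    List.foldl f a l ∈ List.scanl f a l := by
  induction l generalizing a with
  | nil => simp [List.scanl]
  | cons x xs ih => simp only [List.scanl_cons, List.foldl]; exact List.mem_cons_of_mem _ (ih _)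

lemma foldl_eq_endPt (l : List (ℤ × ℤ)) (a : ℤ × ℤ) :
    List.foldl (fun p s => (p.1 + s.1, p.2 + s.2)) a l = (a.1 + (endPt l).1, a.2 + (endPt l).2) := by
  induction l generalizing a with
  | nil => simp [endPt]
  | cons x xs ih =>
      simp only [List.foldl, ih, endPt, List.map_cons, List.sum_cons]
      exact Prod.ext (by dsimp; ring) (by dsimp; ring)

lemma endPt_append (l : List (ℤ × ℤ)) (s : ℤ × ℤ) :
    endPt (l ++ [s]) = ((endPt l).1 + s.1, (endPt l).2 + s.2) := by
  simp [endPt]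

lemma pts_append (l : List (ℤ × ℤ)) (s : ℤ × ℤ) :
    pts (l ++ [s]) = pts l ++ [((endPt l).1 + s.1, (endPt l).2 + s.2)] := by
  simp [pts, scanl_append_singleton, foldl_eq_endPt]

lemma endPt_mem_pts (l : List (ℤ × ℤ)) : endPt l ∈ pts l := by
  have := foldl_mem_scanl (fun p s : ℤ × ℤ => (p.1 + s.1, p.2 + s.2)) l (0, 0)
  rw [foldl_eq_endPt] at this
  simpa [pts] using this

lemma length_le_sum {l : List (ℤ × ℤ)} (h : schSteps l) :
    (l.length : ℤ) ≤ (endPt l).1 + (endPt l).2 := by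
  have h1 : (endPt l).1 + (endPt l).2 = (l.map (fun s => s.1 + s.2)).sum := by
    induction l with
    | nil => simp [endPt]
    | cons x xs ih =>
        simp only [endPt, List.map_cons, List.sum_cons] at *
        have := ih (fun s hs => h s (List.mem_cons_of_mem _ hs))
        omega
  have h2 : ((l.map (fun _ => (1:ℤ))).sum ≤ (l.map (fun s => s.1 + s.2)).sum) := by
    refine List.sum_le_sum fun s hs => ?_
    rcases h s hs with rfl | rfl | rfl <;> norm_num
  simpa [h1] using h2

def St (n k : ℕ) : Set (List (ℤ × ℤ)) :=
  {l | schSteps l ∧ endPt l = ((n : ℤ), (k : ℤ)) ∧ strictBelowAfterStart l}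

lemma finite_schSteps_len (m : ℕ) : {l : List (ℤ × ℤ) | schSteps l ∧ l.length ≤ m}.Finite := by
  haveI : Finite ({(1,0),(0,1),(1,1)} : Set (ℤ × ℤ)) :=
    ((Set.finite_singleton _).insert _ |>.insert _).to_subtype
  have hsub : {l : List (ℤ × ℤ) | schSteps l ∧ l.length ≤ m} ⊆
      (fun l : List ({(1,0),(0,1),(1,1)} : Set (ℤ × ℤ)) => l.map Subtype.val) ''
        {l | l.length ≤ m} := by
    intro l hl
    refine ⟨l.attach.map (fun x => ⟨x.1, by
      rcases hl.1 x.1 x.2 with h | h | h <;> simp [h]⟩), by simpa using hl.2, ?_⟩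
    simp [Function.comp_def]
    exact List.attach_map_subtype_val l
  exact ((List.finite_length_le _ m).image _).subset hsub

lemma St_finite (n k : ℕ) : (St n k).Finite := by
  refine (finite_schSteps_len (n + k)).subset fun l hl => ⟨hl.1, ?_⟩
  have h := length_le_sum hl.1
  rw [hl.2.1] at h
  have : (l.length : ℤ) ≤ ((n : ℤ) + k) := by simpa using h
  exact_mod_cast this

lemma gf_eq : schroederGF = 1 + X * schroederGF + X * schroederGF ^ 2 := by
  ext n
  cases n with
  | zero =>
      simp [schroederGF, schroeder, PowerSeries.coeff_zero_eq_constantCoeff, map_mul, map_add]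
  | succ m =>
      rw [map_add, map_add, PowerSeries.coeff_succ_X_mul, PowerSeries.coeff_succ_X_mul,
        PowerSeries.coeff_one]
      simp only [schroederGF, PowerSeries.coeff_mk, sq, PowerSeries.coeff_mul]
      rw [Finset.Nat.sum_antidiagonal_eq_sum_range_succ_mk]
      show (schroeder (m + 1) : ℤ) = _
      rw [schroeder]
      push_cast
      rw [Fin.sum_univ_eq_sum_range (fun i => (schroeder i : ℤ) * (schroeder (m - i) : ℤ))]
      ring

lemma coeff_zero_pow (e : ℕ) : PowerSeries.coeff 0 (schroederGF ^ e) = 1 := by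
  rw [PowerSeries.coeff_zero_eq_constantCoeff, map_pow]
  have : PowerSeries.constantCoeff schroederGF = 1 := by
    simp [schroederGF, ← PowerSeries.coeff_zero_eq_constantCoeff, schroeder]
  rw [this, one_pow]

lemma coeff_rec (d k : ℕ) :
    PowerSeries.coeff (k + 1) (schroederGF ^ (d + 1)) =
      PowerSeries.coeff (k + 1) (schroederGF ^ d) +
        PowerSeries.coeff k (schroederGF ^ (d + 1)) +
        PowerSeries.coeff k (schroederGF ^ (d + 2)) := by
  have h : schroederGF ^ (d + 1) =
      schroederGF ^ d + X * schroederGF ^ (d + 1) + X * schroederGF ^ (d + 2) := by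
    calc schroederGF ^ (d + 1) = schroederGF ^ d * schroederGF := pow_succ _ _
      _ = schroederGF ^ d * (1 + X * schroederGF + X * schroederGF ^ 2) := by rw [← gf_eq]
      _ = schroederGF ^ d + X * schroederGF ^ (d + 1) + X * schroederGF ^ (d + 2) := by ring
  conv_lhs => rw [h]
  rw [map_add, map_add, PowerSeries.coeff_succ_X_mul, PowerSeries.coeff_succ_X_mul]

lemma endPt_nonneg {l : List (ℤ × ℤ)} (h : schSteps l) :
    0 ≤ (endPt l).1 ∧ 0 ≤ (endPt l).2 := by
  constructor <;>
  · refine List.sum_nonneg fun x hx => ?_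
    obtain ⟨s, hs, rfl⟩ := List.mem_map.mp hx
    rcases h s hs with rfl | rfl | rfl <;> norm_num

lemma St_zero : St 0 0 = {[]} := by
  ext l
  constructor
  · rintro ⟨h1, h2, _⟩
    have := length_le_sum h1
    rw [h2] at this
    norm_num at this
    exact this
  · rintro rfl
    refine ⟨fun s hs => absurd hs List.not_mem_nil, by simp [endPt], fun p hp hne => ?_⟩
    simp [pts] at hp
    exact absurd hp hne

lemma St_diag {n : ℕ} (hn : 0 < n) : St n n = ∅ := by
  ext l
  simp only [Set.mem_empty_iff_false, iff_false]
  rintro ⟨h1, h2, h3⟩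
  have hmem := endPt_mem_pts l
  rw [h2] at hmem
  have := h3 _ hmem (by simp; intro h; omega)
  simp at this

lemma append_mem {n k : ℕ} (hkn : k < n) {s : ℤ × ℤ}
    (hs : s = (1, 0) ∨ s = (0, 1) ∨ s = (1, 1)) {l : List (ℤ × ℤ)}
    (h1 : schSteps l) (h2 : endPt l = ((n : ℤ) - s.1, (k : ℤ) - s.2))
    (h3 : strictBelowAfterStart l) : (l ++ [s]) ∈ St n k := by
  refine ⟨fun t ht => ?_, ?_, ?_⟩
  · rcases List.mem_append.mp ht with h | h
    · exact h1 t h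
    · simpa using hs.imp id (Or.imp id id) |>.imp (fun h' => (List.mem_singleton.mp h) ▸ h')
        (Or.imp (fun h' => (List.mem_singleton.mp h) ▸ h') (fun h' => (List.mem_singleton.mp h) ▸ h'))
  · rw [endPt_append, h2]; simp
  · intro p hp hne
    rw [pts_append, h2] at hp
    rcases List.mem_append.mp hp with h | h
    · exact h3 p h hne
    · have : p = ((n : ℤ), (k : ℤ)) := by
        simpa using List.mem_singleton.mp h
      rw [this]
      show (k : ℤ) < (n : ℤ)
      exact_mod_cast hkn

lemma St_last {n k : ℕ} (hn : 0 < n) {l : List (ℤ × ℤ)} (hl : l ∈ St n k) :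
    ∃ l' s, l = l' ++ [s] ∧ (s = (1, 0) ∨ s = (0, 1) ∨ s = (1, 1)) ∧
      schSteps l' ∧ endPt l' = ((n : ℤ) - s.1, (k : ℤ) - s.2) ∧ strictBelowAfterStart l' := by
  obtain ⟨h1, h2, h3⟩ := hl
  have hne : l ≠ [] := by
    rintro rfl
    rw [Prod.ext_iff] at h2
    simp [endPt] at h2
    omega
  have hdec : l.dropLast ++ [l.getLast hne] = l := List.dropLast_append_getLast hne
  have hend : endPt l.dropLast = ((n : ℤ) - (l.getLast hne).1, (k : ℤ) - (l.getLast hne).2) := by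
    have := endPt_append l.dropLast (l.getLast hne)
    rw [hdec, h2] at this
    have h1' := congrArg Prod.fst this
    have h2' := congrArg Prod.snd this
    simp at h1' h2'
    exact Prod.ext (by omega) (by omega)
  refine ⟨l.dropLast, l.getLast hne, hdec.symm, h1 _ (List.getLast_mem hne),
    fun t ht => h1 t ((List.dropLast_sublist l).mem ht), hend, fun p hp hne' => ?_⟩
  refine h3 p ?_ hne'
  have := pts_append l.dropLast (l.getLast hne)
  rw [hdec] at this
  rw [this]
  exact List.mem_append_left _ hp

lemma cast_pred {k : ℕ} (hk : 1 ≤ k) : ((k - 1 : ℕ) : ℤ) = (k : ℤ) - 1 := by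
  push_cast [hk]; ring

lemma St_decomp {n k : ℕ} (hk : 1 ≤ k) (hkn : k < n) :
    St n k = ((· ++ [((1:ℤ), (0:ℤ))]) '' St (n-1) k) ∪ ((· ++ [((0:ℤ), (1:ℤ))]) '' St n (k-1)) ∪
      ((· ++ [((1:ℤ), (1:ℤ))]) '' St (n-1) (k-1)) := by
  have hn : 1 ≤ n := hk.trans hkn.le
  have hn' : ((n - 1 : ℕ) : ℤ) = (n : ℤ) - 1 := cast_pred hn
  have hk' : ((k - 1 : ℕ) : ℤ) = (k : ℤ) - 1 := cast_pred hk
  ext l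
  constructor
  · intro hl
    obtain ⟨l', s, rfl, hs, h1, h2, h3⟩ := St_last (by omega) hl
    rcases hs with rfl | rfl | rfl
    · exact Or.inl (Or.inl ⟨l', ⟨h1, by rw [h2]; simp [hn'], h3⟩, rfl⟩)
    · exact Or.inl (Or.inr ⟨l', ⟨h1, by rw [h2]; simp [hk'], h3⟩, rfl⟩)
    · exact Or.inr ⟨l', ⟨h1, by rw [h2]; simp [hn', hk'], h3⟩, rfl⟩
  · rintro ((⟨l', ⟨h1, h2, h3⟩, rfl⟩ | ⟨l', ⟨h1, h2, h3⟩, rfl⟩) | ⟨l', ⟨h1, h2, h3⟩, rfl⟩)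
    · exact append_mem hkn (Or.inl rfl) h1 (by rw [h2]; simp [hn']) h3
    · exact append_mem hkn (Or.inr (Or.inl rfl)) h1 (by rw [h2]; simp [hk']) h3
    · exact append_mem hkn (Or.inr (Or.inr rfl)) h1 (by rw [h2]; simp [hn', hk']) h3

lemma St_decomp0 {n : ℕ} (hn : 0 < n) :
    St n 0 = ((· ++ [((1:ℤ), (0:ℤ))]) '' St (n-1) 0) := by
  have hn' : ((n - 1 : ℕ) : ℤ) = (n : ℤ) - 1 := cast_pred hn
  ext l
  constructor
  · intro hl
    obtain ⟨l', s, rfl, hs, h1, h2, h3⟩ := St_last hn hl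
    have hnn := (endPt_nonneg h1).2
    rcases hs with rfl | rfl | rfl
    · exact ⟨l', ⟨h1, by rw [h2]; simp [hn'], h3⟩, rfl⟩
    · rw [h2] at hnn; norm_num at hnn
    · rw [h2] at hnn; norm_num at hnn
  · rintro ⟨l', ⟨h1, h2, h3⟩, rfl⟩
    exact append_mem hn (Or.inl rfl) h1 (by rw [h2]; simp [hn']) h3

lemma disj_images (s t : ℤ × ℤ) (hst : s ≠ t) (A B : Set (List (ℤ × ℤ))) :
    Disjoint ((· ++ [s]) '' A) ((· ++ [t]) '' B) := by
  rw [Set.disjoint_left]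
  rintro l ⟨l1, _, rfl⟩ ⟨l2, _, he⟩
  have := (List.append_inj' he rfl).2
  simp at this
  exact hst this.symm

lemma card_St_decomp {n k : ℕ} (hk : 1 ≤ k) (hkn : k < n) :
    Nat.card (St n k) =
      Nat.card (St (n-1) k) + Nat.card (St n (k-1)) + Nat.card (St (n-1) (k-1)) := by
  rw [Nat.card_coe_set_eq, Nat.card_coe_set_eq, Nat.card_coe_set_eq,
    Nat.card_coe_set_eq, St_decomp hk hkn]
  rw [Set.ncard_union_eq (by
      refine Set.disjoint_union_left.mpr ⟨disj_images _ _ (by decide) _ _, disj_images _ _ (by decide) _ _⟩)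
    (((St_finite _ _).image _).union ((St_finite _ _).image _)) ((St_finite _ _).image _),
    Set.ncard_union_eq (disj_images _ _ (by decide) _ _) ((St_finite _ _).image _)
      ((St_finite _ _).image _),
    Set.ncard_image_of_injective _ (List.append_left_injective _),
    Set.ncard_image_of_injective _ (List.append_left_injective _),
    Set.ncard_image_of_injective _ (List.append_left_injective _)]

lemma card_St_decomp0 {n : ℕ} (hn : 0 < n) :
    Nat.card (St n 0) = Nat.card (St (n-1) 0) := by
  rw [Nat.card_coe_set_eq, Nat.card_coe_set_eq, St_decomp0 hn,
    Set.ncard_image_of_injective _ (List.append_left_injective _)]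

lemma main : ∀ N n k, n + k = N → k ≤ n →
    (Nat.card (St n k) : ℤ) = PowerSeries.coeff k (schroederGF ^ (n - k)) := by
  intro N
  induction N using Nat.strong_induction_on with
  | _ N ih =>
    intro n k hN hkn
    subst hN
    rcases Nat.eq_zero_or_pos n with rfl | hn
    · obtain rfl : k = 0 := by omega
      rw [St_zero]
      simp [Nat.card_coe_set_eq, PowerSeries.coeff_one]
    rcases eq_or_lt_of_le hkn with rfl | hlt
    · rw [St_diag hn]
      simp [PowerSeries.coeff_one, hn.ne']
    rcases Nat.eq_zero_or_pos k with rfl | hk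
    · rw [card_St_decomp0 hn, ih ((n - 1) + 0) (by omega) (n - 1) 0 rfl (Nat.zero_le _)]
      simp [coeff_zero_pow]
    · obtain ⟨j, rfl⟩ : ∃ j, k = j + 1 := ⟨k - 1, by omega⟩
      obtain ⟨d, rfl⟩ : ∃ d, n = (j + 1) + d + 1 := ⟨n - j - 2, by omega⟩
      rw [card_St_decomp (by omega) (by omega)]
      push_cast
      rw [ih ((j + 1 + d) + (j + 1)) (by omega) (j + 1 + d) (j + 1) rfl (by omega),
        ih ((j + 1 + d + 1) + j) (by omega) (j + 1 + d + 1) j rfl (by omega),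
        ih ((j + 1 + d) + j) (by omega) (j + 1 + d) j rfl (by omega)]
      have e3 : j + 1 + d - (j + 1) = d := by omega
      have e4 : j + 1 + d + 1 - j = d + 2 := by omega
      have e5 : j + 1 + d - j = d + 1 := by omega
      rw [e3, e4, e5, coeff_rec d j]
      ring


/-- for n > k ≥ 0, paths to (n,k) with steps (1,0),(0,1),(1,1) strictly
below the diagonal except at the start are counted by [x^k] S(x)^(n-k). -/
theorem strict_subdiagonal_schroeder_count (n k : ℕ) (h : k < n) :
    (Nat.card ↥{l : List (ℤ × ℤ) |
        schSteps l ∧ endPt l = ((n : ℤ), (k : ℤ)) ∧ strictBelowAfterStart l} : ℤ) =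
      PowerSeries.coeff k (schroederGF ^ (n - k)) :=
  main (n + k) n k rfl h.le
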